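/- For every integer n ≥ 2, every 2-colouring of F_{n^2} ⊠ P_n (the strong product of the fan on n^2+1 vertices with the path on n vertices) has a monochromatic component with at least (1/2)·n^2 vertices. Consequently this clustering is Ω(|V(F_{n^2} ⊠ P_n)|^{2/3}). -/

import Mathlib

open SimpleGraph

universe u v

/-- The strong product of two simple graphs. -/
def StrongProd {α : Type u} {β : Type v} (G : SimpleGraph α) (H : SimpleGraph β) :
    SimpleGraph (α × β) where
  Adj x y := (x.1 = y.1 ∧ H.Adj x.2 y.2) ∨ (x.2 = y.2 ∧ G.Adj x.1 y.1) ∨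
    (G.Adj x.1 y.1 ∧ H.Adj x.2 y.2)
  symm := by
    constructor
    rintro x y (⟨h1, h2⟩ | ⟨h1, h2⟩ | ⟨h1, h2⟩)
    · exact Or.inl ⟨h1.symm, h2.symm⟩
    · exact Or.inr (Or.inl ⟨h1.symm, h2.symm⟩)
    · exact Or.inr (Or.inr ⟨h1.symm, h2.symm⟩)
  loopless := by
    constructor
    rintro x (⟨h1, h2⟩ | ⟨h1, h2⟩ | ⟨h1, h2⟩)
    · exact h2.ne rfl
    · exact h2.ne rfl
    · exact h1.ne rfl

/-- The fan graph `F_n`: a path on `n` vertices (vertices `1,…,n`) together with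
one dominant vertex (vertex `0`) adjacent to all path vertices. -/
def Fan (n : ℕ) : SimpleGraph (Fin (n + 1)) :=
  SimpleGraph.fromRel (fun u v => u = 0 ∨ u.val + 1 = v.val)

/-- The cone over `m` disjoint copies of `G`: `m` pairwise disjoint copies of `G`
together with one new vertex adjacent to every vertex of every copy. -/
def GraphCone {V : Type u} (m : ℕ) (G : SimpleGraph V) :
    SimpleGraph (Option (Fin m × V)) where
  Adj x y :=
    match x, y with
    | none, none => False
    | none, some _ => True
    | some _, none => True
    | some (i, _u), some (j, _v) => i = j ∧ G.Adj _u _v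
  symm := by
    constructor
    rintro (_ | ⟨i, u⟩) (_ | ⟨j, v⟩) h
    · exact h
    · trivial
    · trivial
    · exact ⟨h.1.symm, h.2.symm⟩
  loopless := by
    constructor
    rintro (_ | ⟨i, u⟩) h
    · exact h
    · exact h.2.ne rfl

/-- `G` has a tree-decomposition of width at most `t`. -/
def TreewidthLE {V : Type u} (G : SimpleGraph V) (t : ℕ) : Prop :=
  ∃ (ι : Type) (T : SimpleGraph ι) (W : ι → Finset V),
    T.IsTree ∧
    (∀ ⦃u v : V⦄, G.Adj u v → ∃ x, u ∈ W x ∧ v ∈ W x) ∧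
    (∀ v : V, (T.induce {x | v ∈ W x}).Connected) ∧
    (∀ x, (W x).card ≤ t + 1)

/-- A set of vertices is monochromatic under a colouring `f`. -/
def IsMonochromatic {V : Type u} {c : ℕ} (f : V → Fin c) (S : Finset V) : Prop :=
  ∀ u ∈ S, ∀ v ∈ S, f u = f v

/-- Every monochromatic component of the colouring `f` of `G` has at most `k` vertices. -/
def ClusterLE {V : Type u} {c : ℕ} (G : SimpleGraph V) (f : V → Fin c) (k : ℕ) : Prop :=
  ∀ S : Finset V, IsMonochromatic f S → (G.induce (S : Set V)).Connected → S.card ≤ k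

/-- Every monochromatic component of the colouring `f` of `G` has at most `b` vertices
(real-valued bound). -/
def ClusterLEReal {V : Type u} {c : ℕ} (G : SimpleGraph V) (f : V → Fin c) (b : ℝ) : Prop :=
  ∀ S : Finset V, IsMonochromatic f S → (G.induce (S : Set V)).Connected → (S.card : ℝ) ≤ b
section Aux

private lemma fin2_cases (x u w : Fin 2) (h : u ≠ w) : x = u ∨ x = w := by
  revert x u w; decide

private lemma fin2_eq_of_ne (u x y : Fin 2) (hx : x ≠ u) (hy : y ≠ u) : x = y := by
  revert u x y; decide

private lemma strongProd_adj {α : Type u} {β : Type v} (G : SimpleGraph α) (H : SimpleGraph β)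
    (x y : α × β) :
    (StrongProd G H).Adj x y ↔ (x.1 = y.1 ∧ H.Adj x.2 y.2) ∨ (x.2 = y.2 ∧ G.Adj x.1 y.1) ∨
      (G.Adj x.1 y.1 ∧ H.Adj x.2 y.2) := Iff.rfl

private lemma fan_adj (m : ℕ) (x y : Fin (m + 1)) :
    (Fan m).Adj x y ↔ x ≠ y ∧ ((x = 0 ∨ x.val + 1 = y.val) ∨ (y = 0 ∨ y.val + 1 = x.val)) := by
  simp [Fan, SimpleGraph.fromRel_adj]

/-- Connectivity of an induced subgraph from a decreasing-measure scheme. -/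
private lemma conn_of_measure {W : Type u} (G : SimpleGraph W) (S : Finset W) (v₀ : W)
    (h₀ : v₀ ∈ S) (m : W → ℕ)
    (h : ∀ v ∈ S, v ≠ v₀ → ∃ u ∈ S, G.Adj u v ∧ m u < m v) :
    (G.induce (S : Set W)).Connected := by
  have key : ∀ (k : ℕ) (v : W) (hv : v ∈ (S : Set W)), m v ≤ k →
      (G.induce (S : Set W)).Reachable ⟨v, hv⟩ ⟨v₀, Finset.mem_coe.mpr h₀⟩ := by
    intro k
    induction k with
    | zero =>
      intro v hv hm
      by_cases hveq : v = v₀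
      · subst hveq; exact Reachable.refl _
      · obtain ⟨u, hu, hadj, hlt⟩ := h v (Finset.mem_coe.mp hv) hveq
        omega
    | succ k ih =>
      intro v hv hm
      by_cases hveq : v = v₀
      · subst hveq; exact Reachable.refl _
      · obtain ⟨u, hu, hadj, hlt⟩ := h v (Finset.mem_coe.mp hv) hveq
        have hadj' : (G.induce (S : Set W)).Adj ⟨u, Finset.mem_coe.mpr hu⟩ ⟨v, hv⟩ := hadj
        exact hadj'.reachable.symm.trans (ih u (Finset.mem_coe.mpr hu) (by omega))
  have : Nonempty (S : Set W) := ⟨⟨v₀, Finset.mem_coe.mpr h₀⟩⟩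
  exact ⟨fun a b => (key (m a.1) a.1 a.2 le_rfl).trans (key (m b.1) b.1 b.2 le_rfl).symm⟩

private lemma block_inj {n : ℕ} (hn : 0 < n) {k₁ k₂ r₁ r₂ : ℕ} (h₁ : r₁ < n) (h₂ : r₂ < n)
    (h : k₁ * n + r₁ = k₂ * n + r₂) : k₁ = k₂ ∧ r₁ = r₂ := by
  have e1 : (k₁ * n + r₁) / n = k₁ := by
    rw [mul_comm, Nat.mul_add_div hn, Nat.div_eq_of_lt h₁, add_zero]
  have e2 : (k₂ * n + r₂) / n = k₂ := by
    rw [mul_comm, Nat.mul_add_div hn, Nat.div_eq_of_lt h₂, add_zero]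
  have hk : k₁ = k₂ := by rw [← e1, ← e2, h]
  subst hk
  exact ⟨rfl, by omega⟩

end Aux

/-- For `n ≥ 2`, every 2-colouring of `F_{n²} ⊠ P_n` has a monochromatic component with
at least `n²/2` vertices. -/
theorem two_colour_lower (n : ℕ) (hn : 2 ≤ n) (f : Fin (n ^ 2 + 1) × Fin n → Fin 2) :
    ∃ S : Finset (Fin (n ^ 2 + 1) × Fin n), IsMonochromatic f S ∧
      ((StrongProd (Fan (n ^ 2)) (SimpleGraph.pathGraph n)).induce
        (S : Set (Fin (n ^ 2 + 1) × Fin n))).Connected ∧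
      (n : ℝ) ^ 2 / 2 ≤ (S.card : ℝ) := by
  classical
  have npos : 0 < n := by omega
  by_cases hsame : ∀ j : Fin n, f (0, j) = f (0, ⟨0, npos⟩)
  · -- Case 2 : all apexes have the same colour c
    set c := f (0, ⟨0, npos⟩) with hc
    set C : Finset (Fin (n ^ 2 + 1) × Fin n) :=
      Finset.univ.filter (fun p => f p = c) with hCdef
    by_cases hbig : (n : ℝ) ^ 2 / 2 ≤ (C.card : ℝ)
    · -- Case 2a : the colour-c class is big; it is connected through the apexes
      refine ⟨C, ?_, ?_, hbig⟩
      · intro u hu v hv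
        rw [(Finset.mem_filter.mp hu).2, (Finset.mem_filter.mp hv).2]
      · apply conn_of_measure _ _ ((0 : Fin (n ^ 2 + 1)), (⟨0, npos⟩ : Fin n))
          (Finset.mem_filter.mpr ⟨Finset.mem_univ _, hsame _⟩)
          (fun p => if p.1 = 0 then p.2.val else n)
        intro v hv hne
        by_cases h1 : v.1 = 0
        · have h2 : v.2.val ≠ 0 := by
            intro h0
            exact hne (Prod.ext h1 (Fin.ext h0))
          have hlt : v.2.val - 1 < n := by omega
          refine ⟨(0, ⟨v.2.val - 1, hlt⟩),
            Finset.mem_filter.mpr ⟨Finset.mem_univ _, hsame _⟩, ?_, ?_⟩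
          · rw [strongProd_adj]
            left
            refine ⟨h1.symm, SimpleGraph.pathGraph_adj.mpr (Or.inl ?_)⟩
            show v.2.val - 1 + 1 = v.2.val
            omega
          · simp only [h1, if_pos rfl]
            show v.2.val - 1 < v.2.val
            omega
        · refine ⟨(0, v.2), Finset.mem_filter.mpr ⟨Finset.mem_univ _, hsame _⟩, ?_, ?_⟩
          · rw [strongProd_adj]
            right; left
            exact ⟨rfl, (fan_adj _ _ _).mpr ⟨Ne.symm h1, Or.inl (Or.inl rfl)⟩⟩
          · simp only [h1, if_pos rfl, if_neg h1]
            exact v.2.isLt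
    · -- Case 2b : the colour-c class is small
      push_neg at hbig
      have hC2 : 2 * C.card < n ^ 2 := by
        have h2 : ((2 * C.card : ℕ) : ℝ) < ((n ^ 2 : ℕ) : ℝ) := by push_cast; linarith
        exact_mod_cast h2
      have colval : ∀ k r : Fin n, k.val * n + r.val + 1 < n ^ 2 + 1 := by
        intro k r
        have h1 : k.val + 1 ≤ n := k.isLt
        have h2 : r.val + 1 ≤ n := r.isLt
        have h3 : (k.val + 1) * n ≤ n * n := Nat.mul_le_mul_right n h1
        have h4 : n ^ 2 = n * n := by ring
        nlinarith
      set col : Fin n → Fin n → Fin (n ^ 2 + 1) :=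
        fun k r => ⟨k.val * n + r.val + 1, colval k r⟩ with hcol
      have colvalrfl : ∀ k r : Fin n, (col k r).val = k.val * n + r.val + 1 := fun _ _ => rfl
      have colne : ∀ k r : Fin n, col k r ≠ 0 := by
        intro k r h
        have h1 : (col k r).val = (0 : Fin (n ^ 2 + 1)).val := congrArg Fin.val h
        rw [colvalrfl] at h1
        simp at h1
      have colinj : ∀ k₁ k₂ r₁ r₂ : Fin n, col k₁ r₁ = col k₂ r₂ → k₁ = k₂ ∧ r₁ = r₂ := by
        intro k₁ k₂ r₁ r₂ h
        have h1 : (col k₁ r₁).val = (col k₂ r₂).val := congrArg Fin.val h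
        rw [colvalrfl, colvalrfl] at h1
        have h2 : k₁.val * n + r₁.val = k₂.val * n + r₂.val := by omega
        obtain ⟨hk, hr⟩ := block_inj npos r₁.isLt r₂.isLt h2
        exact ⟨Fin.ext hk, Fin.ext hr⟩
      set zk : Fin n → ℕ := fun k => (Finset.univ.filter
        (fun p : Fin n × Fin n => f (col k p.1, p.2) = c)).card with hzk
      -- some block of n consecutive columns has few colour-c vertices
      have hblock : ∃ k, 2 * zk k < n := by
        by_contra hcon
        push_neg at hcon
        set Bk : Fin n → Finset (Fin (n ^ 2 + 1) × Fin n) := fun k =>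
          (Finset.univ.filter (fun p : Fin n × Fin n => f (col k p.1, p.2) = c)).image
            (fun p => (col k p.1, p.2)) with hBk
        have hBkcard : ∀ k, (Bk k).card = zk k := by
          intro k
          rw [hBk]
          apply Finset.card_image_of_injOn
          intro p _ q _ hpq
          have h1 := (Prod.ext_iff.mp hpq).1
          have h2 := (Prod.ext_iff.mp hpq).2
          exact Prod.ext ((colinj _ _ _ _ h1).2) h2
        have hdisj : ∀ k₁ ∈ (Finset.univ : Finset (Fin n)), ∀ k₂ ∈ Finset.univ, k₁ ≠ k₂ →
            Disjoint (Bk k₁) (Bk k₂) := by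
          intro k₁ _ k₂ _ hne
          rw [Finset.disjoint_left]
          intro x hx1 hx2
          obtain ⟨p, _, hp⟩ := Finset.mem_image.mp hx1
          obtain ⟨q, _, hq⟩ := Finset.mem_image.mp hx2
          rw [← hq] at hp
          exact hne (colinj _ _ _ _ (Prod.ext_iff.mp hp).1).1
        have hsum : (Finset.univ.biUnion Bk).card = ∑ k, zk k := by
          rw [Finset.card_biUnion hdisj]
          exact Finset.sum_congr rfl (fun k _ => hBkcard k)
        have hsubC : Finset.univ.biUnion Bk ⊆ C.filter (fun p => p.1 ≠ 0) := by
          intro x hx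
          obtain ⟨k, -, hxk⟩ := Finset.mem_biUnion.mp hx
          obtain ⟨p, hp, hpe⟩ := Finset.mem_image.mp hxk
          have hpc := (Finset.mem_filter.mp hp).2
          rw [← hpe]
          exact Finset.mem_filter.mpr ⟨Finset.mem_filter.mpr ⟨Finset.mem_univ _, hpc⟩, colne k p.1⟩
        have hapexcard : n ≤ (C.filter (fun p => p.1 = 0)).card := by
          have himg : (Finset.univ.image (fun j : Fin n => ((0 : Fin (n ^ 2 + 1)), j))) ⊆
              C.filter (fun p => p.1 = 0) := by
            intro x hx
            obtain ⟨j, -, hje⟩ := Finset.mem_image.mp hx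
            rw [← hje]
            exact Finset.mem_filter.mpr ⟨Finset.mem_filter.mpr ⟨Finset.mem_univ _, hsame j⟩, rfl⟩
          have hic : (Finset.univ.image (fun j : Fin n => ((0 : Fin (n ^ 2 + 1)), j))).card = n := by
            rw [Finset.card_image_of_injective _ (fun j₁ j₂ h => (Prod.ext_iff.mp h).2)]
            simp
          calc n = _ := hic.symm
          _ ≤ _ := Finset.card_le_card himg
        have hdisj2 : Disjoint (C.filter (fun p => p.1 = 0)) (C.filter (fun p => p.1 ≠ 0)) := by
          rw [Finset.disjoint_left]
          intro p h1 h2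
          exact (Finset.mem_filter.mp h2).2 (Finset.mem_filter.mp h1).2
        have hUsub : (C.filter (fun p => p.1 = 0)) ∪ (C.filter (fun p => p.1 ≠ 0)) ⊆ C :=
          Finset.union_subset (Finset.filter_subset _ _) (Finset.filter_subset _ _)
        have hsplit : (C.filter (fun p => p.1 = 0)).card + (C.filter (fun p => p.1 ≠ 0)).card
            ≤ C.card := by
          rw [← Finset.card_union_of_disjoint hdisj2]
          exact Finset.card_le_card hUsub
        have hlow : n * n ≤ 2 * ∑ k, zk k := by
          have h1 : ∀ k ∈ (Finset.univ : Finset (Fin n)), n ≤ 2 * zk k := fun k _ => hcon k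
          have h2 := Finset.sum_le_sum h1
          rw [Finset.sum_const, Finset.card_univ, Fintype.card_fin, smul_eq_mul] at h2
          rw [Finset.mul_sum]
          exact h2
        have hup := Finset.card_le_card hsubC
        have hn2 : n ^ 2 = n * n := by ring
        omega
      obtain ⟨k, hk⟩ := hblock
      -- a fully non-c row of the block
      have hjstar : ∃ j : Fin n, ∀ r : Fin n, f (col k r, j) ≠ c := by
        by_contra hcon
        push_neg at hcon
        choose g hg using hcon
        have hsub : Finset.univ.image (fun j : Fin n => ((g j, j) : Fin n × Fin n)) ⊆
            Finset.univ.filter (fun p : Fin n × Fin n => f (col k p.1, p.2) = c) := by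
          intro x hx
          obtain ⟨j, -, hje⟩ := Finset.mem_image.mp hx
          rw [← hje]
          exact Finset.mem_filter.mpr ⟨Finset.mem_univ _, hg j⟩
        have h1 := Finset.card_le_card hsub
        rw [Finset.card_image_of_injective _
          (fun j₁ j₂ h => (Prod.ext_iff.mp h).2), Finset.card_univ, Fintype.card_fin] at h1
        have h2 : n ≤ zk k := h1
        omega
      obtain ⟨jstar, hjstar⟩ := hjstar
      -- clean columns of the block
      set cleanR : Finset (Fin n) :=
        Finset.univ.filter (fun r => ∀ j, f (col k r, j) ≠ c) with hcleandef
      have hcleancard : n ≤ cleanR.card + zk k := by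
        set g : Fin n → Fin n :=
          fun r => if h : ∃ j, f (col k r, j) = c then h.choose else ⟨0, npos⟩ with hgdef
        have hmap : ∀ r ∈ Finset.univ.filter
            (fun r : Fin n => ¬ (∀ j, f (col k r, j) ≠ c)), ((r, g r) : Fin n × Fin n) ∈
            Finset.univ.filter (fun p : Fin n × Fin n => f (col k p.1, p.2) = c) := by
          intro r hr
          have h1 := (Finset.mem_filter.mp hr).2
          push_neg at h1
          refine Finset.mem_filter.mpr ⟨Finset.mem_univ _, ?_⟩
          show f (col k r, g r) = c
          rw [hgdef]
          simp only [dif_pos h1]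
          exact h1.choose_spec
        have hinj : Set.InjOn (fun r : Fin n => ((r, g r) : Fin n × Fin n))
            ((Finset.univ.filter (fun r : Fin n => ¬ (∀ j, f (col k r, j) ≠ c))) : Set (Fin n)) := by
          intro a _ b _ hab
          exact (Prod.ext_iff.mp hab).1
        have h2 := Finset.card_le_card_of_injOn _ hmap hinj
        have hcover : (Finset.univ : Finset (Fin n)) ⊆ cleanR ∪
            (Finset.univ.filter (fun r : Fin n => ¬ (∀ j, f (col k r, j) ≠ c))) := by
          intro r _
          by_cases h : ∀ j, f (col k r, j) ≠ c
          · exact Finset.mem_union_left _ (Finset.mem_filter.mpr ⟨Finset.mem_univ _, h⟩)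
          · exact Finset.mem_union_right _ (Finset.mem_filter.mpr ⟨Finset.mem_univ _, h⟩)
        have h3 := Finset.card_le_card hcover
        have h4 := Finset.card_union_le cleanR
          (Finset.univ.filter (fun r : Fin n => ¬ (∀ j, f (col k r, j) ≠ c)))
        rw [Finset.card_univ, Fintype.card_fin] at h3
        have h5 : zk k = (Finset.univ.filter
          (fun p : Fin n × Fin n => f (col k p.1, p.2) = c)).card := rfl
        omega
      -- the comb : clean columns plus the clean row jstar
      set S : Finset (Fin (n ^ 2 + 1) × Fin n) :=
        (cleanR ×ˢ (Finset.univ : Finset (Fin n))).image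
          (fun p => ((col k p.1, p.2) : Fin (n ^ 2 + 1) × Fin n)) ∪
        (Finset.univ : Finset (Fin n)).image
          (fun r => ((col k r, jstar) : Fin (n ^ 2 + 1) × Fin n)) with hSdef
      have hSnotc : ∀ p ∈ S, f p ≠ c := by
        intro p hp
        rcases Finset.mem_union.mp hp with h | h
        · obtain ⟨q, hq, hqe⟩ := Finset.mem_image.mp h
          obtain ⟨hq1, -⟩ := Finset.mem_product.mp hq
          rw [← hqe]
          exact (Finset.mem_filter.mp hq1).2 q.2
        · obtain ⟨r, -, hre⟩ := Finset.mem_image.mp h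
          rw [← hre]
          exact hjstar r
      refine ⟨S, ?_, ?_, ?_⟩
      · intro u hu v hv
        exact fin2_eq_of_ne c _ _ (hSnotc u hu) (hSnotc v hv)
      · -- connectivity of the comb
        have hv₀ : ((col k ⟨0, npos⟩, jstar) : Fin (n ^ 2 + 1) × Fin n) ∈ S :=
          Finset.mem_union_right _ (Finset.mem_image.mpr ⟨⟨0, npos⟩, Finset.mem_univ _, rfl⟩)
        apply conn_of_measure _ _ _ hv₀
          (fun p => (max p.2.val jstar.val - min p.2.val jstar.val) * (n ^ 2 + 2) + p.1.val)
        intro v hv hne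
        have hform : ∃ (r j : Fin n), v = (col k r, j) ∧ (j = jstar ∨ r ∈ cleanR) := by
          rcases Finset.mem_union.mp hv with hmem | hmem
          · obtain ⟨q, hq, hqe⟩ := Finset.mem_image.mp hmem
            exact ⟨q.1, q.2, hqe.symm, Or.inr (Finset.mem_product.mp hq).1⟩
          · obtain ⟨r, -, hre⟩ := Finset.mem_image.mp hmem
            exact ⟨r, jstar, hre.symm, Or.inl rfl⟩
        obtain ⟨r, j, rfl, hrj⟩ := hform
        by_cases hj : j = jstar
        · -- on the spine : move left
          have hr0 : r.val ≠ 0 := by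
            intro h0
            apply hne
            rw [hj, show r = ⟨0, npos⟩ from Fin.ext h0]
          have hrlt : r.val - 1 < n := by omega
          refine ⟨(col k ⟨r.val - 1, hrlt⟩, jstar),
            Finset.mem_union_right _ (Finset.mem_image.mpr ⟨⟨r.val - 1, hrlt⟩, Finset.mem_univ _, rfl⟩),
            ?_, ?_⟩
          · have hfa : (Fan (n ^ 2)).Adj (col k ⟨r.val - 1, hrlt⟩) (col k r) := by
              have hv1 : ((⟨r.val - 1, hrlt⟩ : Fin n) : Fin n).val = r.val - 1 := rfl
              rw [fan_adj]
              constructor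
              · intro hcc
                have h1 := congrArg Fin.val hcc
                rw [colvalrfl, colvalrfl, hv1] at h1
                omega
              · refine Or.inl (Or.inr ?_)
                rw [colvalrfl, colvalrfl, hv1]
                omega
            exact Or.inr (Or.inl ⟨hj.symm, hfa⟩)
          · show (max jstar.val jstar.val - min jstar.val jstar.val) * (n ^ 2 + 2)
                + (k.val * n + (r.val - 1) + 1)
              < (max j.val jstar.val - min j.val jstar.val) * (n ^ 2 + 2)
                + (k.val * n + r.val + 1)
            rw [hj, Nat.max_self, Nat.min_self, Nat.sub_self, Nat.zero_mul]
            omega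
        · -- on a clean column : move towards the spine
          have hrclean : r ∈ cleanR := hrj.resolve_left hj
          have hjne : j.val ≠ jstar.val := fun h => hj (Fin.ext h)
          by_cases hlt : j.val < jstar.val
          · have hjlt : j.val + 1 < n := by omega
            refine ⟨(col k r, ⟨j.val + 1, hjlt⟩),
              Finset.mem_union_left _ (Finset.mem_image.mpr
                ⟨(r, ⟨j.val + 1, hjlt⟩), Finset.mem_product.mpr ⟨hrclean, Finset.mem_univ _⟩, rfl⟩),
              ?_, ?_⟩
            · rw [strongProd_adj]
              left
              refine ⟨rfl, SimpleGraph.pathGraph_adj.mpr (Or.inr ?_)⟩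
              show j.val + 1 = j.val + 1
              rfl
            · have e1 : (max (j.val + 1) jstar.val - min (j.val + 1) jstar.val)
                  = jstar.val - (j.val + 1) := by omega
              have e2 : (max j.val jstar.val - min j.val jstar.val) = jstar.val - j.val := by
                omega
              show (max (j.val + 1) jstar.val - min (j.val + 1) jstar.val) * (n ^ 2 + 2)
                  + (k.val * n + r.val + 1)
                < (max j.val jstar.val - min j.val jstar.val) * (n ^ 2 + 2)
                  + (k.val * n + r.val + 1)
              rw [e1, e2]
              have hmul : (jstar.val - (j.val + 1)) * (n ^ 2 + 2)
                  < (jstar.val - j.val) * (n ^ 2 + 2) :=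
                (Nat.mul_lt_mul_right (by omega)).mpr (by omega)
              exact Nat.add_lt_add_right hmul _
          · have hgt : jstar.val < j.val := by omega
            have hjlt : j.val - 1 < n := by omega
            refine ⟨(col k r, ⟨j.val - 1, hjlt⟩),
              Finset.mem_union_left _ (Finset.mem_image.mpr
                ⟨(r, ⟨j.val - 1, hjlt⟩), Finset.mem_product.mpr ⟨hrclean, Finset.mem_univ _⟩, rfl⟩),
              ?_, ?_⟩
            · rw [strongProd_adj]
              left
              refine ⟨rfl, SimpleGraph.pathGraph_adj.mpr (Or.inl ?_)⟩
              show j.val - 1 + 1 = j.val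
              omega
            · have e1 : (max (j.val - 1) jstar.val - min (j.val - 1) jstar.val)
                  = (j.val - 1) - jstar.val := by omega
              have e2 : (max j.val jstar.val - min j.val jstar.val) = j.val - jstar.val := by
                omega
              show (max (j.val - 1) jstar.val - min (j.val - 1) jstar.val) * (n ^ 2 + 2)
                  + (k.val * n + r.val + 1)
                < (max j.val jstar.val - min j.val jstar.val) * (n ^ 2 + 2)
                  + (k.val * n + r.val + 1)
              rw [e1, e2]
              have hmul : ((j.val - 1) - jstar.val) * (n ^ 2 + 2)
                  < (j.val - jstar.val) * (n ^ 2 + 2) :=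
                (Nat.mul_lt_mul_right (by omega)).mpr (by omega)
              exact Nat.add_lt_add_right hmul _
      · -- cardinality of the comb
        have himgcard : ((cleanR ×ˢ (Finset.univ : Finset (Fin n))).image
            (fun p => ((col k p.1, p.2) : Fin (n ^ 2 + 1) × Fin n))).card = cleanR.card * n := by
          rw [Finset.card_image_of_injOn, Finset.card_product, Finset.card_univ, Fintype.card_fin]
          intro p _ q _ hpq
          have h1 := (Prod.ext_iff.mp hpq).1
          have h2 := (Prod.ext_iff.mp hpq).2
          exact Prod.ext ((colinj _ _ _ _ h1).2) h2
        have hcard1 : cleanR.card * n ≤ S.card := by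
          rw [← himgcard]
          exact Finset.card_le_card Finset.subset_union_left
        have h2c : n + 1 ≤ 2 * cleanR.card := by omega
        have hnat : n * n ≤ 2 * S.card := by nlinarith
        have hreal : ((n * n : ℕ) : ℝ) ≤ ((2 * S.card : ℕ) : ℝ) := by exact_mod_cast hnat
        push_cast at hreal
        nlinarith
  · -- Case 1 : two consecutive apexes with different colours
    push_neg at hsame
    obtain ⟨j₀, hj₀⟩ := hsame
    have hcons : ∃ a b : Fin n, b.val = a.val + 1 ∧ f (0, a) ≠ f (0, b) := by
      by_contra hcon
      push_neg at hcon
      have all0 : ∀ (v : ℕ) (hv : v < n), f (0, ⟨v, hv⟩) = f (0, ⟨0, npos⟩) := by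
        intro v
        induction v with
        | zero => intro hv; rfl
        | succ w ih =>
          intro hv
          have hw : w < n := by omega
          have h1 := hcon ⟨w, hw⟩ ⟨w + 1, hv⟩ rfl
          rw [← h1]
          exact ih hw
      have h2 := all0 j₀.val j₀.isLt
      rw [Fin.eta] at h2
      exact hj₀ h2
    obtain ⟨a, b, hab, hfab⟩ := hcons
    set T : Finset (Fin (n ^ 2 + 1) × Fin n) :=
      (Finset.univ.filter (fun i : Fin (n ^ 2 + 1) => i ≠ 0)) ×ˢ ({a, b} : Finset (Fin n))
        with hTdef
    have hane : a ≠ b := by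
      intro h
      rw [h] at hab
      omega
    have hTcard : T.card = n ^ 2 * 2 := by
      rw [hTdef, Finset.card_product, Finset.filter_ne', Finset.card_erase_of_mem
        (Finset.mem_univ _), Finset.card_univ, Fintype.card_fin, Finset.card_pair hane]
      omega
    set A := T.filter (fun p => f p = f (0, a)) with hAdef
    set B := T.filter (fun p => f p = f (0, b)) with hBdef
    have hsub : T ⊆ A ∪ B := by
      intro p hp
      rcases fin2_cases (f p) (f (0, a)) (f (0, b)) hfab with h | h
      · exact Finset.mem_union_left _ (Finset.mem_filter.mpr ⟨hp, h⟩)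
      · exact Finset.mem_union_right _ (Finset.mem_filter.mpr ⟨hp, h⟩)
    have hAB : n ^ 2 ≤ A.card ∨ n ^ 2 ≤ B.card := by
      have h1 := Finset.card_le_card hsub
      have h2 := Finset.card_union_le A B
      omega
    have main : ∃ (x : Fin n) (D : Finset (Fin (n ^ 2 + 1) × Fin n)), n ^ 2 ≤ D.card ∧
        (∀ p ∈ D, f p = f (0, x)) ∧
        (∀ p ∈ D, p.1 ≠ 0 ∧ ((SimpleGraph.pathGraph n).Adj p.2 x ∨ p.2 = x)) := by
      have hstruct : ∀ p ∈ T, p.1 ≠ 0 ∧ (p.2 = a ∨ p.2 = b) := by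
        intro p hp
        rw [hTdef] at hp
        obtain ⟨h1, h2⟩ := Finset.mem_product.mp hp
        refine ⟨(Finset.mem_filter.mp h1).2, ?_⟩
        rcases Finset.mem_insert.mp h2 with h | h
        · exact Or.inl h
        · exact Or.inr (Finset.mem_singleton.mp h)
      rcases hAB with h | h
      · refine ⟨a, A, h, fun p hp => (Finset.mem_filter.mp hp).2, ?_⟩
        intro p hp
        obtain ⟨h1, h2⟩ := hstruct p (Finset.mem_filter.mp hp).1
        refine ⟨h1, ?_⟩
        rcases h2 with h | h
        · exact Or.inr h
        · refine Or.inl ?_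
          rw [h]
          exact SimpleGraph.pathGraph_adj.mpr (Or.inr hab.symm)
      · refine ⟨b, B, h, fun p hp => (Finset.mem_filter.mp hp).2, ?_⟩
        intro p hp
        obtain ⟨h1, h2⟩ := hstruct p (Finset.mem_filter.mp hp).1
        refine ⟨h1, ?_⟩
        rcases h2 with h | h
        · refine Or.inl ?_
          rw [h]
          exact SimpleGraph.pathGraph_adj.mpr (Or.inl hab.symm)
        · exact Or.inr h
    obtain ⟨x, D, hDcard, hDmono, hDstruct⟩ := main
    refine ⟨insert ((0 : Fin (n ^ 2 + 1)), x) D, ?_, ?_, ?_⟩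
    · have hval : ∀ w ∈ insert ((0 : Fin (n ^ 2 + 1)), x) D, f w = f (0, x) := by
        intro w hw
        rcases Finset.mem_insert.mp hw with h | h
        · rw [h]
        · exact hDmono w h
      intro u hu v hv
      rw [hval u hu, hval v hv]
    · apply conn_of_measure _ _ ((0 : Fin (n ^ 2 + 1)), x) (Finset.mem_insert_self _ _)
        (fun p => if p = ((0 : Fin (n ^ 2 + 1)), x) then 0 else 1)
      intro v hv hne
      refine ⟨((0 : Fin (n ^ 2 + 1)), x), Finset.mem_insert_self _ _, ?_, by simp [hne]⟩
      have hvD : v ∈ D := by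
        rcases Finset.mem_insert.mp hv with h | h
        · exact absurd h hne
        · exact h
      obtain ⟨hv1, hv2⟩ := hDstruct v hvD
      have hfan : (Fan (n ^ 2)).Adj 0 v.1 :=
        (fan_adj _ _ _).mpr ⟨Ne.symm hv1, Or.inl (Or.inl rfl)⟩
      rw [strongProd_adj]
      rcases hv2 with h | h
      · exact Or.inr (Or.inr ⟨hfan, h.symm⟩)
      · exact Or.inr (Or.inl ⟨h.symm, hfan⟩)
    · have h1 : D.card ≤ (insert ((0 : Fin (n ^ 2 + 1)), x) D).card :=
        Finset.card_le_card (Finset.subset_insert _ _)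
      have h2 : (n : ℝ) ^ 2 ≤ ((insert ((0 : Fin (n ^ 2 + 1)), x) D).card : ℝ) := by
        have h3 : n ^ 2 ≤ (insert ((0 : Fin (n ^ 2 + 1)), x) D).card := le_trans hDcard h1
        exact_mod_cast h3
      linarith
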